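/- Let Y₁,…,Y_k be i.i.d. Laplace random variables with scale b > 0, let q₁,…,q_k ∈ [0,1], and Y = Σᵢ qᵢYᵢ. If α > kb, then Pr[Y ≥ α] ≤ exp(-α/(6b)). -/

import Mathlib

open MeasureTheory Real BigOperators

/-- The Laplace distribution with scale `b`, given by the density
`(1/(2b)) * exp (-|x|/b)` with respect to Lebesgue measure. -/
noncomputable def laplaceMeasure (b : ℝ) : Measure ℝ :=
  volume.withDensity fun x => ENNReal.ofReal ((1 / (2 * b)) * Real.exp (-|x| / b))

open Set ProbabilityTheory


lemma expIoi {a : ℝ} (ha : 0 < a) :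
    IntegrableOn (fun x => exp (-(a * x))) (Ioi 0) ∧
      (∫ x in Ioi (0:ℝ), exp (-(a * x))) = a⁻¹ := by
  constructor
  · simpa [neg_mul] using exp_neg_integrableOn_Ioi 0 ha
  · have := integral_comp_mul_left_Ioi (fun x => exp (-x)) 0 ha
    simp only [mul_zero, integral_exp_neg_Ioi, neg_zero, exp_zero, smul_eq_mul, mul_one] at this
    simpa using this

lemma expIic {a : ℝ} (ha : 0 < a) :
    IntegrableOn (fun x => exp (a * x)) (Iic 0) ∧
      (∫ x in Iic (0:ℝ), exp (a * x)) = a⁻¹ := by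
  have A : MeasurableEmbedding (fun x : ℝ => -x) :=
    (Homeomorph.neg ℝ).isClosedEmbedding.measurableEmbedding
  have hmap : Measure.map (fun x : ℝ => -x) (volume.restrict (Ici (0:ℝ)))
      = volume.restrict (Iic (0:ℝ)) := by
    have h1 := Measure.restrict_map (μ := (volume : Measure ℝ)) A.measurable
      (measurableSet_Iic (a := (0:ℝ)))
    rw [Measure.map_neg_eq_self (volume : Measure ℝ)] at h1
    have h2 : ((fun x : ℝ => -x) ⁻¹' Iic (0:ℝ)) = Ici (0:ℝ) := by ext x; simp
    rw [h2] at h1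
    exact h1.symm
  constructor
  · rw [IntegrableOn, ← hmap, A.integrable_map_iff]
    have : IntegrableOn (fun x => exp (-(a * x))) (Ici 0) := by
      rw [integrableOn_Ici_iff_integrableOn_Ioi]
      exact (expIoi ha).1
    have hco : ((fun x : ℝ => exp (a * x)) ∘ fun x => -x) = fun x => exp (-(a * x)) := by
      ext x; simp [Function.comp, mul_neg]
    rw [hco]; exact this
  · have := integral_comp_neg_Iic (0:ℝ) (fun x => exp (-(a * x)))
    simp only [neg_zero] at this
    rw [show (fun x : ℝ => exp (a * x)) = fun x => exp (-(a * -x)) by ext x; ring_nf]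
    rw [this]
    exact (expIoi ha).2

lemma laplace_core {b c : ℝ} (hb : 0 < b) (hc0 : 0 ≤ c) (hc1 : c ≤ 1) :
    Integrable (fun x => exp (c / (2 * b) * x) * ((1 / (2 * b)) * exp (-|x| / b))) volume ∧
      (∫ x, exp (c / (2 * b) * x) * ((1 / (2 * b)) * exp (-|x| / b))) ≤ 4 / 3 := by
  set f : ℝ → ℝ := fun x => exp (c / (2 * b) * x) * ((1 / (2 * b)) * exp (-|x| / b)) with hf
  have hb2 : (0:ℝ) < 2 * b := by linarith
  set a₁ : ℝ := (2 - c) / (2 * b) with ha₁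
  set a₂ : ℝ := (2 + c) / (2 * b) with ha₂
  have ha₁pos : 0 < a₁ := div_pos (by linarith) hb2
  have ha₂pos : 0 < a₂ := div_pos (by linarith) hb2
  have heq₁ : ∀ x ∈ Ioi (0:ℝ), f x = (1 / (2 * b)) * exp (-(a₁ * x)) := by
    intro x hx
    rw [hf]
    simp only [abs_of_pos (mem_Ioi.mp hx)]
    rw [← mul_assoc, mul_comm (exp _) (1 / (2*b)), mul_assoc, ← exp_add]
    congr 2
    rw [ha₁]
    field_simp
    ring
  have heq₂ : ∀ x ∈ Iic (0:ℝ), f x = (1 / (2 * b)) * exp (a₂ * x) := by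
    intro x hx
    rw [hf]
    simp only [abs_of_nonpos (mem_Iic.mp hx)]
    rw [← mul_assoc, mul_comm (exp _) (1 / (2*b)), mul_assoc, ← exp_add]
    congr 2
    rw [ha₂]
    field_simp
    ring
  have hint₁ : IntegrableOn f (Ioi 0) :=
    IntegrableOn.congr_fun ((expIoi ha₁pos).1.const_mul (1 / (2*b)))
      (fun x hx => (heq₁ x hx).symm) measurableSet_Ioi
  have hint₂ : IntegrableOn f (Iic 0) :=
    IntegrableOn.congr_fun ((expIic ha₂pos).1.const_mul (1 / (2*b)))
      (fun x hx => (heq₂ x hx).symm) measurableSet_Iic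
  have hint : Integrable f volume := by
    rw [← integrableOn_univ, ← Iic_union_Ioi (a := (0:ℝ))]
    exact hint₂.union hint₁
  refine ⟨hint, ?_⟩
  have hsplit : (∫ x, f x) = (∫ x in Iic (0:ℝ), f x) + ∫ x in Ioi (0:ℝ), f x :=
    (intervalIntegral.integral_Iic_add_Ioi hint₂ hint₁).symm
  have hv₁ : (∫ x in Ioi (0:ℝ), f x) = 1 / (2 - c) := by
    rw [setIntegral_congr_fun measurableSet_Ioi heq₁, integral_const_mul, (expIoi ha₁pos).2]
    rw [ha₁]; field_simp
  have hv₂ : (∫ x in Iic (0:ℝ), f x) = 1 / (2 + c) := by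
    rw [setIntegral_congr_fun measurableSet_Iic heq₂, integral_const_mul, (expIic ha₂pos).2]
    rw [ha₂]; field_simp
  rw [hsplit, hv₁, hv₂]
  rw [div_add_div _ _ (by linarith) (by linarith), div_le_div_iff₀ (by nlinarith) (by norm_num)]
  nlinarith [sq_nonneg c]

open ProbabilityTheory BigOperators

lemma laplace_exp_int {b c : ℝ} (hb : 0 < b) (hc0 : 0 ≤ c) (hc1 : c ≤ 1) :
    Integrable (fun x => exp (c / (2 * b) * x))
      (volume.withDensity fun x => ENNReal.ofReal ((1 / (2 * b)) * Real.exp (-|x| / b))) ∧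
    (∫ x, exp (c / (2 * b) * x)
      ∂(volume.withDensity fun x => ENNReal.ofReal ((1 / (2 * b)) * Real.exp (-|x| / b)))) ≤
      4 / 3 := by
  have hb2 : (0:ℝ) < 2 * b := by linarith
  set r : ℝ → ℝ := fun x => (1 / (2 * b)) * Real.exp (-|x| / b) with hr
  have hrmeas : Measurable r :=
    measurable_const.mul ((measurable_abs.neg.div_const b).exp)
  have hrnn : ∀ x, 0 ≤ r x := fun x =>
    mul_nonneg (by positivity) (exp_nonneg _)
  constructor
  · rw [integrable_withDensity_iff (hrmeas.ennreal_ofReal)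
      (Filter.Eventually.of_forall fun x => ENNReal.ofReal_lt_top)]
    have : (fun x => exp (c / (2 * b) * x) * (ENNReal.ofReal (r x)).toReal)
        = fun x => exp (c / (2 * b) * x) * r x := by
      ext x; rw [ENNReal.toReal_ofReal (hrnn x)]
    rw [this]
    exact (laplace_core hb hc0 hc1).1
  · have hd : (fun x => ENNReal.ofReal (r x))
        = fun x => ((Real.toNNReal (r x) : NNReal) : ENNReal) := rfl
    rw [hd, integral_withDensity_eq_integral_smul
      (hrmeas.real_toNNReal) (fun x => exp (c / (2 * b) * x))]
    have : (fun x => Real.toNNReal (r x) • exp (c / (2 * b) * x))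
        = fun x => exp (c / (2 * b) * x) * r x := by
      ext x
      rw [NNReal.smul_def, smul_eq_mul, Real.coe_toNNReal _ (hrnn x), mul_comm]
    rw [this]
    exact (laplace_core hb hc0 hc1).2

/-- Tail bound for weighted sums of i.i.d. Laplace random variables,
large-deviation regime: if `α > k b` then
`Pr[∑ qᵢ Yᵢ ≥ α] ≤ exp (-α / (6 b))`. -/
theorem laplace_weighted_sum_tail_large
    {Ω : Type*} [MeasureSpace Ω] [IsProbabilityMeasure (volume : Measure Ω)]
    (k : ℕ) (hk : 0 < k) (b : ℝ) (hb : 0 < b)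
    (Y : Fin k → Ω → ℝ) (hmeas : ∀ i, Measurable (Y i))
    (hlaw : ∀ i, Measure.map (Y i) (volume : Measure Ω) = laplaceMeasure b)
    (hindep : ProbabilityTheory.iIndepFun Y (volume : Measure Ω))
    (q : Fin k → ℝ) (hq : ∀ i, q i ∈ Set.Icc (0 : ℝ) 1)
    (α : ℝ) (hα : k * b < α) :
    ((volume : Measure Ω) {ω | α ≤ ∑ i, q i * Y i ω}).toReal ≤
      Real.exp (-α / (6 * b)) := by
  have hb2 : (0:ℝ) < 2 * b := by linarith
  set t : ℝ := 1 / (2 * b) with ht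
  have ht0 : 0 ≤ t := by positivity
  set X : Fin k → Ω → ℝ := fun i ω => q i * Y i ω with hX
  have hXmeas : ∀ i, Measurable (X i) := fun i => (hmeas i).const_mul (q i)
  have hXindep : iIndepFun X (volume : Measure Ω) := by
    have := hindep.comp (fun i (x : ℝ) => q i * x) (fun i => measurable_const_mul (q i))
    exact this
  -- integrability and mgf bound for each X i
  have key : ∀ i, Integrable (fun ω => exp (t * X i ω)) (volume : Measure Ω) ∧
      mgf (X i) (volume : Measure Ω) t ≤ 4 / 3 := by
    intro i
    have hqi := hq i
    have hgi : (fun ω => exp (t * X i ω)) = (fun x => exp (q i / (2 * b) * x)) ∘ Y i := by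
      ext ω
      simp only [hX, Function.comp, ht]
      congr 1
      field_simp
    have hgm : Measurable fun x : ℝ => exp (q i / (2 * b) * x) :=
      (measurable_const_mul _).exp
    have hLint := (laplace_exp_int hb hqi.1 hqi.2).1
    have hint : Integrable ((fun x => exp (q i / (2 * b) * x)) ∘ Y i) (volume : Measure Ω) := by
      rw [← integrable_map_measure hgm.aestronglyMeasurable (hmeas i).aemeasurable, hlaw i]
      exact hLint
    constructor
    · rw [hgi]; exact hint
    · have : mgf (X i) (volume : Measure Ω) t
          = ∫ x, exp (q i / (2 * b) * x) ∂(laplaceMeasure b) := by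
        rw [mgf, ← hlaw i, integral_map (hmeas i).aemeasurable hgm.aestronglyMeasurable]
        refine integral_congr_ae (Filter.Eventually.of_forall fun ω => ?_)
        simp only [hX, ht]
        congr 1
        field_simp
      rw [this]
      exact (laplace_exp_int hb hqi.1 hqi.2).2
  have hSint : Integrable (fun ω => exp (t * (∑ i, X i) ω)) (volume : Measure Ω) :=
    hXindep.integrable_exp_mul_sum hXmeas (fun i _ => (key i).1)
  have hset : {ω | α ≤ ∑ i, q i * Y i ω} = {ω : Ω | α ≤ (∑ i, X i) ω} := by
    ext ω; simp [hX]
  have hchern := measure_ge_le_exp_mul_mgf (μ := (volume : Measure Ω))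
    (X := ∑ i, X i) α ht0 hSint
  rw [hset]
  refine hchern.trans ?_
  rw [hXindep.mgf_sum hXmeas]
  have hprod : (∏ i, mgf (X i) (volume : Measure Ω) t) ≤ (4 / 3) ^ k := by
    calc (∏ i, mgf (X i) (volume : Measure Ω) t) ≤ ∏ _i : Fin k, (4/3 : ℝ) :=
          Finset.prod_le_prod (fun i _ => mgf_nonneg) (fun i _ => (key i).2)
      _ = (4 / 3) ^ k := by simp [div_pow]
  have h43 : ((4:ℝ) / 3) ^ k ≤ exp ((k : ℝ) / 3) := by
    have h1 : (4:ℝ)/3 ≤ exp (1/3) := by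
      have := Real.add_one_le_exp (1/3 : ℝ)
      linarith
    calc ((4:ℝ)/3)^k ≤ (exp (1/3))^k := pow_le_pow_left₀ (by norm_num) h1 k
      _ = exp ((k : ℝ) / 3) := by
          rw [← Real.exp_nat_mul]; congr 1; ring
  calc exp (-t * α) * ∏ i, mgf (X i) (volume : Measure Ω) t
      ≤ exp (-t * α) * exp ((k : ℝ) / 3) := by
        have := hprod.trans h43
        exact mul_le_mul_of_nonneg_left this (exp_nonneg _)
    _ = exp (-t * α + (k : ℝ) / 3) := (Real.exp_add _ _).symm
    _ ≤ exp (-α / (6 * b)) := by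
        rw [Real.exp_le_exp, ht]
        have e1 : -α/(6*b) - (-(1/(2*b)) * α + (k:ℝ)/3) = (α - (k:ℝ)*b) / (3*b) := by
          field_simp
          ring
        have e2 : (0:ℝ) ≤ (α - (k:ℝ)*b) / (3*b) :=
          le_of_lt (div_pos (by linarith) (by linarith))
        linarith
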